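/- Define the vector field h : ℝ³ → ℝ³ by h(x,y,z) = ¼ (x²z − y³, xy² − z³, yz² − x³). Then curl h = (z², x², y²) at every point of ℝ³, i.e., h is a vector Hamiltonian for the system ẋ = z², ẏ = x², ż = y². -/

import Mathlib

/-- The curl of a vector field on ℝ³ (0-based coordinates):
`curl v = (∂₁v₂ - ∂₂v₁, ∂₂v₀ - ∂₀v₂, ∂₀v₁ - ∂₁v₀)`. -/
noncomputable def curl3 (v : (Fin 3 → ℝ) → (Fin 3 → ℝ)) (x : Fin 3 → ℝ) : Fin 3 → ℝ :=
  let pd : Fin 3 → Fin 3 → ℝ := fun i j => fderiv ℝ (fun y => v y j) x (Pi.single i 1)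
  ![pd 1 2 - pd 2 1, pd 2 0 - pd 0 2, pd 0 1 - pd 1 0]

/-- The vector field `h(x,y,z) = ¼ (x²z - y³, xy² - z³, yz² - x³)` is a vector
Hamiltonian of the non-integrable system `ẋ = z², ẏ = x², ż = y²`:
`curl h = (z², x², y²)` at every point of ℝ³. -/
theorem curl_vectorHamiltonian_nonintegrable :
    ∀ p : Fin 3 → ℝ,
      curl3 (fun q => (1 / 4 : ℝ) •
          ![(q 0) ^ 2 * q 2 - (q 1) ^ 3,
            q 0 * (q 1) ^ 2 - (q 2) ^ 3,
            q 1 * (q 2) ^ 2 - (q 0) ^ 3]) p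
        = ![(p 2) ^ 2, (p 0) ^ 2, (p 1) ^ 2] := by
  intro p
  have h0 : HasFDerivAt (fun y : Fin 3 → ℝ => y 0)
      (ContinuousLinearMap.proj 0 : (Fin 3 → ℝ) →L[ℝ] ℝ) p := hasFDerivAt_apply 0 p
  have h1 : HasFDerivAt (fun y : Fin 3 → ℝ => y 1)
      (ContinuousLinearMap.proj 1 : (Fin 3 → ℝ) →L[ℝ] ℝ) p := hasFDerivAt_apply 1 p
  have h2 : HasFDerivAt (fun y : Fin 3 → ℝ => y 2)
      (ContinuousLinearMap.proj 2 : (Fin 3 → ℝ) →L[ℝ] ℝ) p := hasFDerivAt_apply 2 p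
  have hA := (((h0.mul h0).mul h2).sub ((h1.mul h1).mul h1)).const_mul (1/4 : ℝ)
  have hB := ((h0.mul (h1.mul h1)).sub ((h2.mul h2).mul h2)).const_mul (1/4 : ℝ)
  have hC := ((h1.mul (h2.mul h2)).sub ((h0.mul h0).mul h0)).const_mul (1/4 : ℝ)
  simp only [curl3, Pi.smul_apply, Matrix.cons_val_zero, Matrix.cons_val_one,
    Matrix.head_cons, Matrix.cons_val_two, Matrix.tail_cons, smul_eq_mul,
    pow_succ, pow_zero, one_mul]
  simp only [Pi.mul_apply, Pi.sub_apply] at hA hB hC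
  rw [hA.fderiv, hB.fderiv, hC.fderiv]
  simp only [ContinuousLinearMap.smul_apply, ContinuousLinearMap.add_apply,
    ContinuousLinearMap.sub_apply, ContinuousLinearMap.proj_apply, smul_eq_mul]
  funext j
  fin_cases j <;>
    simp [Pi.single_apply] <;> ring
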